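/- arXiv:2102.07861 — 6 statements merged into one kernel-verified Lean document; each statement's English description precedes it below -/
import Mathlib

section
/- Let n ≥ 1, let g ∈ ℝⁿ be a nonzero vector, let H be a symmetric n×n real matrix, let ν > 0 satisfy δᵀHδ ≤ ν‖δ‖² for all δ ∈ ℝⁿ, and let c ≥ 0. Then every δ ∈ ℝⁿ satisfying gᵀδ + (1/2)δᵀHδ ≥ c has ‖δ‖ ≥ (‖g‖/ν)(√(1 + 2νc/‖g‖²) − 1). -/
open Matrix

/-- Lower bound of Lemma 1: every feasible adversarial perturbation
`δ` (i.e. with `gᵀδ + (1/2) δᵀHδ ≥ c`) has norm at least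
`(‖g‖/ν)(√(1 + 2νc/‖g‖²) − 1)`. -/
theorem lemma1_lower_bound (n : ℕ) (hn : 1 ≤ n)
    (g : EuclideanSpace ℝ (Fin n)) (hg : g ≠ 0)
    (H : Matrix (Fin n) (Fin n) ℝ) (hH : H.IsSymm)
    (ν : ℝ) (hν : 0 < ν)
    (hRay : ∀ δ : EuclideanSpace ℝ (Fin n),
      (δ : Fin n → ℝ) ⬝ᵥ H.mulVec δ ≤ ν * ‖δ‖ ^ 2)
    (c : ℝ) (hc : 0 ≤ c) :
    ∀ δ : EuclideanSpace ℝ (Fin n),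
      c ≤ (g : Fin n → ℝ) ⬝ᵥ (δ : Fin n → ℝ) + (1 / 2) * ((δ : Fin n → ℝ) ⬝ᵥ H.mulVec δ) →
      (‖g‖ / ν) * (Real.sqrt (1 + 2 * ν * c / ‖g‖ ^ 2) - 1) ≤ ‖δ‖ := by
  intro δ hδ
  set G := ‖g‖ with hG
  have hGpos : 0 < G := norm_pos_iff.mpr hg
  set r := ‖δ‖ with hr
  have hrnn : 0 ≤ r := norm_nonneg δ
  -- dot product = inner product
  have hdot : (g : Fin n → ℝ) ⬝ᵥ (δ : Fin n → ℝ) = (inner ℝ g δ : ℝ) := by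
    rw [PiLp.inner_apply]
    simp [dotProduct, mul_comm]
  have h1 : (g : Fin n → ℝ) ⬝ᵥ (δ : Fin n → ℝ) ≤ G * r := by
    rw [hdot]
    exact real_inner_le_norm g δ
  have h2 : (δ : Fin n → ℝ) ⬝ᵥ H.mulVec δ ≤ ν * r ^ 2 := hRay δ
  have key : 2 * c ≤ 2 * (G * r) + ν * r ^ 2 := by nlinarith
  -- show sqrt(1 + 2νc/G²) ≤ 1 + ν r / G
  have hsq : Real.sqrt (1 + 2 * ν * c / G ^ 2) ≤ 1 + ν * r / G := by
    have hb : 0 ≤ 1 + ν * r / G := by positivity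
    have : 1 + 2 * ν * c / G ^ 2 ≤ (1 + ν * r / G) ^ 2 := by
      have hG2 : (0:ℝ) < G ^ 2 := by positivity
      have hGne : G ≠ 0 := ne_of_gt hGpos
      field_simp
      nlinarith [mul_le_mul_of_nonneg_left (mul_le_mul_of_nonneg_left key hν.le) hG2.le]
    calc Real.sqrt (1 + 2 * ν * c / G ^ 2) ≤ Real.sqrt ((1 + ν * r / G) ^ 2) :=
          Real.sqrt_le_sqrt this
      _ = 1 + ν * r / G := Real.sqrt_sq hb
  have := mul_le_mul_of_nonneg_left (sub_le_sub_right hsq 1) (le_of_lt (div_pos hGpos hν))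
  calc (G / ν) * (Real.sqrt (1 + 2 * ν * c / G ^ 2) - 1) ≤ (G / ν) * (1 + ν * r / G - 1) := this
    _ = r := by field_simp; ring
end

section
/- Let n ≥ 1, let g ∈ ℝⁿ, let H be a symmetric n×n real matrix, let ν > 0, let u be a unit vector with Hu = νu and gᵀu ≠ 0, and let c ≥ 0. Then there exists δ ∈ ℝⁿ with gᵀδ + (1/2)δᵀHδ ≥ c and ‖δ‖ = (|gᵀu|/ν)(√(1 + 2νc/(gᵀu)²) − 1); namely δ = t·sign(gᵀu)·u with t = (|gᵀu|/ν)(√(1 + 2νc/(gᵀu)²) − 1). -/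
open Matrix

/-- Upper bound of Lemma 1: along the top unit eigenvector `u` of `H` (with `Hu = νu`,
`ν > 0`, `gᵀu ≠ 0`), the point `δ = t · sign(gᵀu) · u` with
`t = (|gᵀu|/ν)(√(1 + 2νc/(gᵀu)²) − 1)` is feasible (`gᵀδ + (1/2) δᵀHδ ≥ c`) and
has norm exactly `t`. -/
theorem lemma1_upper_bound_witness (n : ℕ) (hn : 1 ≤ n)
    (g : EuclideanSpace ℝ (Fin n))
    (H : Matrix (Fin n) (Fin n) ℝ) (hH : H.IsSymm)
    (ν : ℝ) (hν : 0 < ν)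
    (u : EuclideanSpace ℝ (Fin n)) (hu : ‖u‖ = 1)
    (hHu : H.mulVec u = ν • (u : Fin n → ℝ))
    (hgu : (g : Fin n → ℝ) ⬝ᵥ (u : Fin n → ℝ) ≠ 0)
    (c : ℝ) (hc : 0 ≤ c)
    (t : ℝ)
    (ht : t = (|(g : Fin n → ℝ) ⬝ᵥ (u : Fin n → ℝ)| / ν) *
      (Real.sqrt (1 + 2 * ν * c / ((g : Fin n → ℝ) ⬝ᵥ (u : Fin n → ℝ)) ^ 2) - 1)) :
    ∃ δ : EuclideanSpace ℝ (Fin n),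
      (c ≤ (g : Fin n → ℝ) ⬝ᵥ (δ : Fin n → ℝ) + (1 / 2) * ((δ : Fin n → ℝ) ⬝ᵥ H.mulVec δ) ∧
        ‖δ‖ = t) ∧
      δ = (t * Real.sign ((g : Fin n → ℝ) ⬝ᵥ (u : Fin n → ℝ))) • u := by
  set a : ℝ := (g : Fin n → ℝ) ⬝ᵥ (u : Fin n → ℝ) with ha
  refine ⟨(t * Real.sign a) • u, ⟨?_, ?_⟩, rfl⟩
  · -- feasibility
    have huu : (u : Fin n → ℝ) ⬝ᵥ (u : Fin n → ℝ) = 1 := by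
      have h2 : ‖u‖ ^ 2 = (1 : ℝ) := by rw [hu]; norm_num
      rw [← real_inner_self_eq_norm_sq] at h2
      simpa only [EuclideanSpace.inner_eq_star_dotProduct, star_trivial] using h2
    have hcoe : ((((t * Real.sign a) • u) : EuclideanSpace ℝ (Fin n)) : Fin n → ℝ)
        = (t * Real.sign a) • (u : Fin n → ℝ) := rfl
    have hsign : Real.sign a * a = |a| := by
      rcases hgu.lt_or_gt with h | h
      · rw [Real.sign_of_neg h, abs_of_neg h]; ring
      · rw [Real.sign_of_pos h, abs_of_pos h]; ring
    have hsq : Real.sign a * Real.sign a = 1 := by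
      rcases hgu.lt_or_gt with h | h
      · rw [Real.sign_of_neg h]; norm_num
      · rw [Real.sign_of_pos h]; norm_num
    have hgd : (g : Fin n → ℝ) ⬝ᵥ (((t * Real.sign a) • u : EuclideanSpace ℝ (Fin n)) : Fin n → ℝ)
        = t * |a| := by
      rw [hcoe, dotProduct_smul, smul_eq_mul, ← ha]
      rw [mul_assoc, hsign]
    have hHd : (((t * Real.sign a) • u : EuclideanSpace ℝ (Fin n)) : Fin n → ℝ) ⬝ᵥ
        H.mulVec (((t * Real.sign a) • u : EuclideanSpace ℝ (Fin n)) : Fin n → ℝ)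
        = t ^ 2 * ν := by
      rw [hcoe, mulVec_smul, hHu, smul_dotProduct, dotProduct_smul, dotProduct_smul,
        smul_eq_mul, smul_eq_mul, smul_eq_mul, huu]
      have hsq2 : Real.sign a ^ 2 = 1 := by rw [sq]; exact hsq
      ring_nf
      rw [hsq2]; ring
    rw [hgd, hHd]
    -- now arithmetic
    have ha2 : (0:ℝ) < a ^ 2 := by positivity
    have harg : (0:ℝ) ≤ 1 + 2 * ν * c / a ^ 2 := by positivity
    have hs : Real.sqrt (1 + 2 * ν * c / a ^ 2) ^ 2 = 1 + 2 * ν * c / a ^ 2 :=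
      Real.sq_sqrt harg
    set s : ℝ := Real.sqrt (1 + 2 * ν * c / a ^ 2) with hsdef
    have hs' : s ^ 2 * a ^ 2 = a ^ 2 + 2 * ν * c := by
      rw [hs]; field_simp
    have habs : |a| ^ 2 = a ^ 2 := sq_abs a
    have key : t * |a| + 1 / 2 * (t ^ 2 * ν) = c := by
      rw [ht]
      have hν' : ν ≠ 0 := ne_of_gt hν
      have hk : |a| / ν * (s - 1) * |a| + 1 / 2 * ((|a| / ν * (s - 1)) ^ 2 * ν)
          = |a| ^ 2 * (s ^ 2 - 1) / (2 * ν) := by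
        field_simp; ring
      rw [hk, habs, show a ^ 2 * (s ^ 2 - 1) = 2 * ν * c by linear_combination hs']
      exact mul_div_cancel_left₀ c (by positivity)
    linarith [key.ge]
  · -- norm
    have ht0 : 0 ≤ t := by
      rw [ht]
      have : (1:ℝ) ≤ Real.sqrt (1 + 2 * ν * c / a ^ 2) := by
        have h0 : (0:ℝ) ≤ 2 * ν * c / a ^ 2 := by positivity
        have h1 : (1:ℝ) ≤ 1 + 2 * ν * c / a ^ 2 := by linarith
        have := Real.sqrt_le_sqrt h1
        simpa using this
      have : 0 ≤ |a| / ν := by positivity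
      nlinarith
    have habs : |Real.sign a| = 1 := by
      rcases hgu.lt_or_gt with h | h
      · rw [Real.sign_of_neg h]; norm_num
      · rw [Real.sign_of_pos h]; norm_num
    rw [norm_smul, hu, mul_one, Real.norm_eq_abs, abs_mul, habs, mul_one, abs_of_nonneg ht0]
end

section
/- Fix a > 0 and c > 0. The function ν ↦ (a/ν)(√(1 + 2νc/a²) − 1) is strictly decreasing on (0, ∞). In particular, decreasing the largest eigenvalue ν of the input Hessian strictly increases the lower bound on the minimal adversarial perturbation norm. -/
lemma phi_rewrite (a c ν : ℝ) (ha : 0 < a) (hc : 0 < c) (hν : 0 < ν) :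
    (a / ν) * (Real.sqrt (1 + 2 * ν * c / a ^ 2) - 1)
      = (2 * c / a) / (Real.sqrt (1 + 2 * ν * c / a ^ 2) + 1) := by
  have ha2 : (0:ℝ) < a ^ 2 := by positivity
  have hs0 : (0:ℝ) ≤ 1 + 2 * ν * c / a ^ 2 := by positivity
  have hsq : Real.sqrt (1 + 2 * ν * c / a ^ 2) * Real.sqrt (1 + 2 * ν * c / a ^ 2)
      = 1 + 2 * ν * c / a ^ 2 := Real.mul_self_sqrt hs0
  have hpos : (0:ℝ) < Real.sqrt (1 + 2 * ν * c / a ^ 2) + 1 := by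
    have := Real.sqrt_nonneg (1 + 2 * ν * c / a ^ 2); linarith
  have hs0' : (0:ℝ) ≤ a ^ 2 + 2 * ν * c := by nlinarith
  have hsq' : Real.sqrt (a ^ 2 + 2 * ν * c) * Real.sqrt (a ^ 2 + 2 * ν * c)
      = a ^ 2 + 2 * ν * c := Real.mul_self_sqrt hs0'
  field_simp
  have hs := Real.mul_self_sqrt (show (0:ℝ) ≤ (a ^ 2 + ν * 2 * c) / a ^ 2 by positivity)
  have hd : a ^ 2 * ((a ^ 2 + ν * 2 * c) / a ^ 2) = a ^ 2 + ν * 2 * c := mul_div_cancel₀ _ ha2.ne'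
  linear_combination a ^ 2 * hs + hd

/-- For fixed gradient norm `a > 0` and margin `c > 0`, the robustness lower bound
`ν ↦ (a/ν)(√(1 + 2νc/a²) − 1)` of Lemma 1 is strictly decreasing in the curvature
`ν` on `(0, ∞)`: decreasing the largest eigenvalue of the input Hessian strictly
increases the lower bound on the minimal adversarial perturbation norm. -/
theorem phi_strictAnti_in_curvature (a c : ℝ) (ha : 0 < a) (hc : 0 < c) :
    StrictAntiOn (fun ν : ℝ => (a / ν) * (Real.sqrt (1 + 2 * ν * c / a ^ 2) - 1))
      (Set.Ioi (0 : ℝ)) := by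
  intro x hx y hy hxy
  simp only [Set.mem_Ioi] at hx hy
  simp only
  rw [phi_rewrite a c x ha hc hx, phi_rewrite a c y ha hc hy]
  have ha2 : (0:ℝ) < a ^ 2 := by positivity
  have harg : 1 + 2 * x * c / a ^ 2 < 1 + 2 * y * c / a ^ 2 := by
    gcongr
  have hlt : Real.sqrt (1 + 2 * x * c / a ^ 2) < Real.sqrt (1 + 2 * y * c / a ^ 2) :=
    Real.sqrt_lt_sqrt (by positivity) harg
  have hx0 : (0:ℝ) < Real.sqrt (1 + 2 * x * c / a ^ 2) + 1 := by
    have := Real.sqrt_nonneg (1 + 2 * x * c / a ^ 2); linarith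
  exact div_lt_div_of_pos_left (by positivity) hx0 (by linarith)
end

section
/- Let w₁ be an m×n real matrix with operator norm ‖w₁‖, w₂ ∈ ℝᵐ, and σ : ℝ → ℝ be twice differentiable with |σ″(t)| ≤ M for all t ∈ ℝ. Define f(x) = Σᵢ (w₂)ᵢ · σ((w₁x)ᵢ). Then for every x, δ ∈ ℝⁿ, |δᵀ(∇²f(x))δ| ≤ M · (maxᵢ |(w₂)ᵢ|) · ‖w₁‖² · ‖δ‖². In particular, every eigenvalue of the input Hessian ∇²f(x) has absolute value at most M · (maxᵢ |(w₂)ᵢ|) · ‖w₁‖². -/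
open Matrix
open scoped Matrix.Norms.L2Operator

noncomputable def rowCLM {m n : ℕ} (w₁ : Matrix (Fin m) (Fin n) ℝ) (i : Fin m) :
    EuclideanSpace ℝ (Fin n) →L[ℝ] ℝ :=
  LinearMap.toContinuousLinearMap
    { toFun := fun δ => w₁.mulVec δ i
      map_add' := fun a b => by
        show w₁.mulVec (a + b) i = w₁.mulVec a i + w₁.mulVec b i
        simp [Matrix.mulVec, dotProduct, PiLp.add_apply, mul_add, Finset.sum_add_distrib]
      map_smul' := fun c a => by
        show w₁.mulVec (c • a) i = c * w₁.mulVec a i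
        simp [Matrix.mulVec, dotProduct, PiLp.smul_apply, Finset.mul_sum, smul_eq_mul,
          mul_left_comm] }

@[simp] lemma rowCLM_apply {m n : ℕ} (w₁ : Matrix (Fin m) (Fin n) ℝ) (i : Fin m)
    (δ : EuclideanSpace ℝ (Fin n)) : rowCLM w₁ i δ = w₁.mulVec δ i := rfl

lemma hasFDerivAt_net {m n : ℕ} (w₁ : Matrix (Fin m) (Fin n) ℝ) (w₂ : Fin m → ℝ)
    (σ : ℝ → ℝ) (hσ : Differentiable ℝ σ) (y : EuclideanSpace ℝ (Fin n)) :
    HasFDerivAt (fun z : EuclideanSpace ℝ (Fin n) => ∑ i, w₂ i * σ (w₁.mulVec z i))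
      (∑ i, (w₂ i * deriv σ (w₁.mulVec y i)) • rowCLM w₁ i) y := by
  refine HasFDerivAt.fun_sum fun i _ => ?_
  have h := ((hσ (w₁.mulVec y i)).hasDerivAt.comp_hasFDerivAt y (rowCLM w₁ i).hasFDerivAt)
  simpa [smul_smul] using h.const_mul (w₂ i)

lemma hessian_formula {m n : ℕ} (w₁ : Matrix (Fin m) (Fin n) ℝ) (w₂ : Fin m → ℝ)
    (σ : ℝ → ℝ) (hσ : Differentiable ℝ σ) (hσ' : Differentiable ℝ (deriv σ))
    (x δ δ' : EuclideanSpace ℝ (Fin n)) :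
    fderiv ℝ (fun y => fderiv ℝ (fun z : EuclideanSpace ℝ (Fin n) =>
        ∑ i, w₂ i * σ (w₁.mulVec z i)) y δ) x δ' =
      ∑ i, w₂ i * deriv (deriv σ) (w₁.mulVec x i) * w₁.mulVec δ i * w₁.mulVec δ' i := by
  have hfun : (fun y : EuclideanSpace ℝ (Fin n) =>
      fderiv ℝ (fun z : EuclideanSpace ℝ (Fin n) => ∑ i, w₂ i * σ (w₁.mulVec z i)) y δ)
      = fun y : EuclideanSpace ℝ (Fin n) => ∑ i, (w₂ i * w₁.mulVec δ i) * deriv σ (w₁.mulVec y i) := by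
    funext y
    rw [(hasFDerivAt_net w₁ w₂ σ hσ y).fderiv]
    simp only [ContinuousLinearMap.coe_sum', Finset.sum_apply,
      ContinuousLinearMap.coe_smul', Pi.smul_apply, rowCLM_apply, smul_eq_mul]
    exact Finset.sum_congr rfl fun i _ => by ring
  rw [hfun]
  have h2 : HasFDerivAt (fun y : EuclideanSpace ℝ (Fin n) =>
      ∑ i, (w₂ i * w₁.mulVec δ i) * deriv σ (w₁.mulVec y i))
      (∑ i, (w₂ i * w₁.mulVec δ i * deriv (deriv σ) (w₁.mulVec x i)) • rowCLM w₁ i) x := by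
    refine HasFDerivAt.fun_sum fun i _ => ?_
    have h := ((hσ' (w₁.mulVec x i)).hasDerivAt.comp_hasFDerivAt x (rowCLM w₁ i).hasFDerivAt)
    simpa [smul_smul] using h.const_mul (w₂ i * w₁.mulVec δ i)
  refine Eq.trans (congrFun (congrArg DFunLike.coe h2.fderiv) δ') ?_
  simp only [ContinuousLinearMap.coe_sum', Finset.sum_apply,
    ContinuousLinearMap.coe_smul', Pi.smul_apply, rowCLM_apply, smul_eq_mul]
  exact Finset.sum_congr rfl fun i _ => by ring

/-- If the activation `σ` of the two-layer network `f(x) = Σᵢ (w₂)ᵢ σ((w₁x)ᵢ)` has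
curvature bounded by `M` (i.e. `|σ″| ≤ M`), then the quadratic form of the input
Hessian is bounded: `|δᵀ (∇²f(x)) δ| ≤ M · (maxᵢ |(w₂)ᵢ|) · ‖w₁‖² · ‖δ‖²` (with `‖w₁‖`
the ℓ²-operator norm), and in particular every eigenvalue of the input Hessian has
absolute value at most `M · (maxᵢ |(w₂)ᵢ|) · ‖w₁‖²`. -/
theorem two_layer_hessian_bound (m n : ℕ)
    (w₁ : Matrix (Fin m) (Fin n) ℝ) (w₂ : Fin m → ℝ)
    (σ : ℝ → ℝ) (hσ : Differentiable ℝ σ) (hσ' : Differentiable ℝ (deriv σ))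
    (M : ℝ) (hM : ∀ t : ℝ, |deriv (deriv σ) t| ≤ M)
    (f : EuclideanSpace ℝ (Fin n) → ℝ)
    (hf : f = fun x => ∑ i, w₂ i * σ (w₁.mulVec (WithLp.ofLp x) i)) :
    (∀ x δ : EuclideanSpace ℝ (Fin n),
      |fderiv ℝ (fun y => fderiv ℝ f y δ) x δ| ≤
        M * (⨆ i, |w₂ i|) * ‖w₁‖ ^ 2 * ‖δ‖ ^ 2) ∧
    (∀ x : EuclideanSpace ℝ (Fin n), ∀ μ : ℝ, ∀ v : EuclideanSpace ℝ (Fin n), v ≠ 0 →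
      (Matrix.of fun j k =>
          fderiv ℝ (fun y => fderiv ℝ f y (WithLp.toLp 2 (Pi.single k (1 : ℝ)))) x
            (WithLp.toLp 2 (Pi.single j (1 : ℝ)))).mulVec v = μ • (v : Fin n → ℝ) →
      |μ| ≤ M * (⨆ i, |w₂ i|) * ‖w₁‖ ^ 2) := by
  subst hf
  set S := ⨆ i, |w₂ i| with hS
  have hM0 : 0 ≤ M := le_trans (abs_nonneg _) (hM 0)
  have hbdd : BddAbove (Set.range fun i => |w₂ i|) := Finite.bddAbove_range _
  have hw2 : ∀ i, |w₂ i| ≤ S := fun i => le_ciSup hbdd i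
  have hS0 : 0 ≤ S := by
    rcases isEmpty_or_nonempty (Fin m) with h | h
    · simp [hS, Real.iSup_of_isEmpty]
    · exact le_trans (abs_nonneg _) (hw2 (Classical.arbitrary _))
  have key : ∀ x δ : EuclideanSpace ℝ (Fin n),
      |fderiv ℝ (fun y => fderiv ℝ (fun z : EuclideanSpace ℝ (Fin n) =>
          ∑ i, w₂ i * σ (w₁.mulVec z i)) y δ) x δ| ≤ M * S * ‖w₁‖ ^ 2 * ‖δ‖ ^ 2 := by
    intro x δ
    rw [hessian_formula w₁ w₂ σ hσ hσ' x δ δ]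
    have hsum : ∀ i ∈ (Finset.univ : Finset (Fin m)),
        |w₂ i * deriv (deriv σ) (w₁.mulVec x i) * w₁.mulVec δ i * w₁.mulVec δ i| ≤
          M * S * (w₁.mulVec δ i) ^ 2 := by
      intro i _
      have habs : |w₂ i * deriv (deriv σ) (w₁.mulVec x i) * w₁.mulVec δ i * w₁.mulVec δ i|
          = |w₂ i| * |deriv (deriv σ) (w₁.mulVec x i)| * (w₁.mulVec δ i) ^ 2 := by
        rw [abs_mul, abs_mul, abs_mul, mul_assoc, abs_mul_abs_self, ← sq]
      rw [habs]
      have hb : |w₂ i| * |deriv (deriv σ) (w₁.mulVec x i)| ≤ M * S := by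
        calc |w₂ i| * |deriv (deriv σ) (w₁.mulVec x i)| ≤ S * M :=
              mul_le_mul (hw2 i) (hM _) (abs_nonneg _) hS0
          _ = M * S := mul_comm _ _
      exact mul_le_mul_of_nonneg_right hb (sq_nonneg _)
    calc |∑ i, w₂ i * deriv (deriv σ) (w₁.mulVec x i) * w₁.mulVec δ i * w₁.mulVec δ i|
        ≤ ∑ i, |w₂ i * deriv (deriv σ) (w₁.mulVec x i) * w₁.mulVec δ i * w₁.mulVec δ i| :=
          Finset.abs_sum_le_sum_abs _ _
      _ ≤ ∑ i, M * S * (w₁.mulVec δ i) ^ 2 := Finset.sum_le_sum hsum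
      _ = M * S * ∑ i, (w₁.mulVec δ i) ^ 2 := (Finset.mul_sum _ _ _).symm
      _ ≤ M * S * (‖w₁‖ * ‖δ‖) ^ 2 := by
          refine mul_le_mul_of_nonneg_left ?_ (mul_nonneg hM0 hS0)
          have hv := w₁.l2_opNorm_mulVec δ
          have heq : ∑ i, (w₁.mulVec δ i) ^ 2
              = ‖(EuclideanSpace.equiv (Fin m) ℝ).symm (w₁.mulVec δ)‖ ^ 2 := by
            rw [EuclideanSpace.norm_eq, Real.sq_sqrt (by positivity)]
            simp [sq_abs]
          rw [heq]
          exact pow_le_pow_left₀ (norm_nonneg _) hv 2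
      _ = M * S * ‖w₁‖ ^ 2 * ‖δ‖ ^ 2 := by rw [mul_pow]; ring
  refine ⟨key, ?_⟩
  intro x μ v hv hEig
  set a : Fin m → ℝ := fun i => w₂ i * deriv (deriv σ) (w₁.mulVec x i) with ha
  have hHjk : ∀ j k : Fin n,
      (Matrix.of fun j k =>
        fderiv ℝ (fun y => fderiv ℝ (fun z : EuclideanSpace ℝ (Fin n) =>
          ∑ i, w₂ i * σ (w₁.mulVec z i)) y (WithLp.toLp 2 (Pi.single k (1 : ℝ)))) x
          (WithLp.toLp 2 (Pi.single j (1 : ℝ)))) j k = ∑ i, a i * w₁ i k * w₁ i j := by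
    intro j k
    show fderiv ℝ _ x _ = _
    rw [hessian_formula w₁ w₂ σ hσ hσ' x (WithLp.toLp 2 (Pi.single k 1)) (WithLp.toLp 2 (Pi.single j 1))]
    refine Finset.sum_congr rfl fun i _ => ?_
    have hk : ∀ l : Fin n, w₁.mulVec (WithLp.ofLp (WithLp.toLp 2 (Pi.single l (1 : ℝ)))) i = w₁ i l := by
      intro l
      simp [Matrix.mulVec, dotProduct, Pi.single_apply]
    rw [hk, hk, ha]
  set H := Matrix.of fun j k =>
      fderiv ℝ (fun y => fderiv ℝ (fun z : EuclideanSpace ℝ (Fin n) =>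
        ∑ i, w₂ i * σ (w₁.mulVec z i)) y (WithLp.toLp 2 (Pi.single k (1 : ℝ)))) x
        (WithLp.toLp 2 (Pi.single j (1 : ℝ))) with hH
  have hmv : ∀ i, w₁.mulVec v i = ∑ k, w₁ i k * v k := fun i => rfl
  have hquad : v ⬝ᵥ H.mulVec v = ∑ i, a i * w₁.mulVec v i * w₁.mulVec v i := by
    calc v ⬝ᵥ H.mulVec v = ∑ j, ∑ k, ∑ i, v j * (a i * w₁ i k * w₁ i j * v k) := by
          simp only [dotProduct, Matrix.mulVec, hHjk, Finset.sum_mul, Finset.mul_sum]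
      _ = ∑ i, ∑ j, ∑ k, v j * (a i * w₁ i k * w₁ i j * v k) := by
          rw [show (∑ j, ∑ k, ∑ i, v j * (a i * w₁ i k * w₁ i j * v k))
              = ∑ j, ∑ i, ∑ k, v j * (a i * w₁ i k * w₁ i j * v k) from
            Finset.sum_congr rfl fun _ _ => Finset.sum_comm, Finset.sum_comm]
      _ = ∑ i, a i * w₁.mulVec v i * w₁.mulVec v i := by
          refine Finset.sum_congr rfl fun i _ => ?_
          rw [hmv, mul_assoc, Finset.sum_mul_sum]
          simp only [Finset.mul_sum]
          exact Finset.sum_congr rfl fun j _ => Finset.sum_congr rfl fun k _ => by ring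
  have hQ : fderiv ℝ (fun y => fderiv ℝ (fun z : EuclideanSpace ℝ (Fin n) =>
      ∑ i, w₂ i * σ (w₁.mulVec z i)) y v) x v = v ⬝ᵥ H.mulVec v := by
    rw [hessian_formula w₁ w₂ σ hσ hσ' x v v, hquad]
  have hs : (0 : ℝ) < ∑ j, (v j) ^ 2 := by
    have h1 : ‖v‖ ^ 2 = ∑ j, (v j) ^ 2 := by
      rw [EuclideanSpace.norm_eq, Real.sq_sqrt (by positivity)]
      simp [sq_abs]
    have h2 : (0 : ℝ) < ‖v‖ ^ 2 := pow_pos (norm_pos_iff.mpr hv) 2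
    linarith
  have hEig' : H.mulVec v = μ • (v : Fin n → ℝ) := hEig
  have hmu : μ * ∑ j, (v j) ^ 2 = v ⬝ᵥ H.mulVec v := by
    rw [hEig']
    simp only [dotProduct, Finset.mul_sum]
    exact Finset.sum_congr rfl fun j _ => by
      show μ * v j ^ 2 = v j * (μ * v j); ring
  have hvnorm : ‖v‖ ^ 2 = ∑ j, (v j) ^ 2 := by
    rw [EuclideanSpace.norm_eq, Real.sq_sqrt (by positivity)]
    simp [sq_abs]
  have hbound := key x v
  rw [hQ, ← hmu] at hbound
  rw [abs_mul, abs_of_pos hs, hvnorm] at hbound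
  exact le_of_mul_le_mul_right hbound hs
end

section
/- Let s(x) = 1/(1 + exp(−x)) be the sigmoid function and for β ∈ ℝ let PSwish_β(x) = x·s(βx). Then for every x ∈ ℝ, PSwish_β(x) tends to max(x, 0) as β → ∞. -/
open Filter Topology

noncomputable def sigmoid (x : ℝ) : ℝ := 1 / (1 + Real.exp (-x))

noncomputable def PSwish (β x : ℝ) : ℝ := x * sigmoid (β * x)

lemma sigmoid_atTop : Tendsto sigmoid atTop (𝓝 1) := by
  have h : Tendsto (fun y : ℝ => 1 + Real.exp (-y)) atTop (𝓝 1) := by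
    simpa using tendsto_const_nhds.add
      (Real.tendsto_exp_atBot.comp tendsto_neg_atTop_atBot)
  show Tendsto (fun x : ℝ => 1 / (1 + Real.exp (-x))) atTop (𝓝 1)
  simpa [Pi.div_def] using ((tendsto_const_nhds (x := (1:ℝ))).div h (by norm_num))

lemma sigmoid_atBot : Tendsto sigmoid atBot (𝓝 0) := by
  have h : Tendsto (fun y : ℝ => 1 + Real.exp (-y)) atBot atTop := by
    exact tendsto_atTop_add_const_left _ 1
      (Real.tendsto_exp_atTop.comp tendsto_neg_atBot_atTop)
  show Tendsto (fun x : ℝ => 1 / (1 + Real.exp (-x))) atBot (𝓝 0)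
  simpa [sigmoid] using (tendsto_const_nhds (x := (1:ℝ))).div_atTop h

/-- Parametric Swish `PSwish_β(x) = x·sigmoid(βx)` transitions to
`ReLU(x) = max(x, 0)` pointwise as `β → ∞`. -/
theorem pswish_tendsto_relu (x : ℝ) :
    Tendsto (fun β : ℝ => PSwish β x) atTop (𝓝 (max x 0)) := by
  rcases lt_trichotomy x 0 with hx | hx | hx
  · have hbx : Tendsto (fun β : ℝ => β * x) atTop atBot :=
      tendsto_id.atTop_mul_const_of_neg hx
    have := (sigmoid_atBot.comp hbx).const_mul x
    simpa [PSwish, max_eq_right hx.le] using this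
  · subst hx
    simp [PSwish]
  · have hbx : Tendsto (fun β : ℝ => β * x) atTop atTop :=
      Tendsto.atTop_mul_const hx tendsto_id
    have := (sigmoid_atTop.comp hbx).const_mul x
    simpa [PSwish, max_eq_left hx.le] using this
end

section
/- Let s(x) = 1/(1 + exp(−x)) be the sigmoid function and SiLU(x) = x·s(x). Then for every x ∈ ℝ, |SiLU″(x)| ≤ 1. -/
noncomputable def SiLU (x : ℝ) : ℝ := x * sigmoid x

lemma one_add_exp_pos (x : ℝ) : 0 < 1 + Real.exp (-x) := by positivity

lemma hasDerivAt_base (x : ℝ) :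
    HasDerivAt (fun y : ℝ => 1 + Real.exp (-y)) (-Real.exp (-x)) x := by
  have h := ((Real.hasDerivAt_exp (-x)).comp x (hasDerivAt_neg x)).const_add 1
  simpa using h

lemma hasDerivAt_sigmoid (x : ℝ) :
    HasDerivAt sigmoid (Real.exp (-x) / (1 + Real.exp (-x)) ^ 2) x := by
  have h := ((hasDerivAt_base x).inv (one_add_exp_pos x).ne')
  have : sigmoid = fun y : ℝ => (1 + Real.exp (-y))⁻¹ := by
    funext y; simp [sigmoid, one_div]
  rw [this]
  exact h.congr_deriv (by ring)

lemma hasDerivAt_SiLU (x : ℝ) :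
    HasDerivAt SiLU (sigmoid x + x * (Real.exp (-x) / (1 + Real.exp (-x)) ^ 2)) x := by
  exact ((hasDerivAt_id x).mul (hasDerivAt_sigmoid x)).congr_deriv (by simp)

lemma deriv_SiLU : deriv SiLU = fun x =>
    sigmoid x + x * (Real.exp (-x) / (1 + Real.exp (-x)) ^ 2) := by
  funext x; exact (hasDerivAt_SiLU x).deriv

lemma hasDerivAt_ratio (x : ℝ) :
    HasDerivAt (fun y : ℝ => Real.exp (-y) / (1 + Real.exp (-y)) ^ 2)
      (Real.exp (-x) * (Real.exp (-x) - 1) / (1 + Real.exp (-x)) ^ 3) x := by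
  have hnum : HasDerivAt (fun y : ℝ => Real.exp (-y)) (-Real.exp (-x)) x := by
    exact ((Real.hasDerivAt_exp (-x)).comp x (hasDerivAt_neg x)).congr_deriv (by simp)
  have hden : HasDerivAt (fun y : ℝ => (1 + Real.exp (-y)) ^ 2)
      (2 * (1 + Real.exp (-x)) * (-Real.exp (-x))) x := by
    exact ((hasDerivAt_base x).pow 2).congr_deriv (by norm_num <;> ring)
  have h := hnum.div hden (by positivity)
  have hp : (0:ℝ) < 1 + Real.exp (-x) := one_add_exp_pos x
  refine h.congr_deriv ?_
  rw [div_eq_div_iff (by positivity) (by positivity)]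
  ring

lemma deriv2_SiLU (x : ℝ) :
    deriv (deriv SiLU) x =
      (Real.exp (-x) * (2 * (1 + Real.exp (-x)) + x * (Real.exp (-x) - 1)))
        / (1 + Real.exp (-x)) ^ 3 := by
  rw [deriv_SiLU]
  have h := (hasDerivAt_sigmoid x).add ((hasDerivAt_id x).mul (hasDerivAt_ratio x))
  simp only [id] at h
  have h' : HasDerivAt (fun x => sigmoid x + x * (Real.exp (-x) / (1 + Real.exp (-x)) ^ 2)) _ x := h
  rw [h'.deriv]
  have hp : (0:ℝ) < 1 + Real.exp (-x) := one_add_exp_pos x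
  field_simp
  ring

/-- SiLU has uniformly bounded (low) curvature: `|SiLU″(x)| ≤ 1` for every `x`. -/
theorem silu_second_derivative_bounded (x : ℝ) :
    |deriv (deriv SiLU) x| ≤ 1 := by
  rw [deriv2_SiLU]
  set u := Real.exp (-x) with hu
  have hup : 0 < u := Real.exp_pos _
  have hp : (0:ℝ) < 1 + u := by linarith
  rw [abs_div, abs_of_pos (by positivity : (0:ℝ) < (1+u)^3), div_le_one (by positivity)]
  -- bound |x * (u - 1)|
  have hsinh : x * (1 - u) ≤ Real.sinh x * (1 - u) := by
    rcases le_or_gt 0 x with hx | hx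
    · have := Real.self_le_sinh_iff.2 hx
      have hu1 : u ≤ 1 := by
        rw [hu]; calc Real.exp (-x) ≤ Real.exp 0 := Real.exp_le_exp.2 (by linarith)
          _ = 1 := Real.exp_zero
      nlinarith
    · have := Real.sinh_le_self_iff.2 hx.le
      have hu1 : 1 ≤ u := by
        rw [hu]; calc (1:ℝ) = Real.exp 0 := Real.exp_zero.symm
          _ ≤ Real.exp (-x) := Real.exp_le_exp.2 (by linarith)
      nlinarith
  have hnn : 0 ≤ x * (1 - u) := by
    rcases le_or_gt 0 x with hx | hx
    · have hu1 : u ≤ 1 := by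
        rw [hu]; calc Real.exp (-x) ≤ Real.exp 0 := Real.exp_le_exp.2 (by linarith)
          _ = 1 := Real.exp_zero
      nlinarith
    · have hu1 : 1 ≤ u := by
        rw [hu]; calc (1:ℝ) = Real.exp 0 := Real.exp_zero.symm
          _ ≤ Real.exp (-x) := Real.exp_le_exp.2 (by linarith)
      nlinarith
  have hxu : Real.exp x * u = 1 := by rw [hu, ← Real.exp_add]; simp
  have hex : Real.exp x = 1 / u := by rw [eq_div_iff hup.ne']; exact hxu
  have hsinh_eq : Real.sinh x = (1 - u ^ 2) / (2 * u) := by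
    rw [Real.sinh_eq, hex, ← hu]; field_simp
  have hkey : x * (1 - u) ≤ (1 - u) ^ 2 * (1 + u) / (2 * u) := by
    calc x * (1 - u) ≤ Real.sinh x * (1 - u) := hsinh
      _ = (1 - u ^ 2) / (2 * u) * (1 - u) := by rw [hsinh_eq]
      _ = (1 - u) ^ 2 * (1 + u) / (2 * u) := by field_simp; ring
  have habs : |2 * (1 + u) + x * (u - 1)| ≤ 2 * (1 + u) + x * (1 - u) := by
    calc |2 * (1 + u) + x * (u - 1)| ≤ |2 * (1 + u)| + |x * (u - 1)| := abs_add_le _ _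
      _ = 2 * (1 + u) + x * (1 - u) := by
          rw [abs_of_pos (by linarith : (0:ℝ) < 2 * (1 + u))]
          congr 1
          rw [show x * (u - 1) = -(x * (1 - u)) by ring, abs_neg, abs_of_nonneg hnn]
  rw [abs_mul, abs_of_pos hup]
  have h1 : u * |2 * (1 + u) + x * (u - 1)| ≤ u * (2 * (1 + u) + x * (1 - u)) :=
    mul_le_mul_of_nonneg_left habs hup.le
  have h2 : u * (x * (1 - u)) ≤ (1 - u) ^ 2 * (1 + u) / 2 := by
    have := mul_le_mul_of_nonneg_left hkey hup.le
    calc u * (x * (1 - u)) ≤ u * ((1 - u) ^ 2 * (1 + u) / (2 * u)) := this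
      _ = (1 - u) ^ 2 * (1 + u) / 2 := by field_simp
  nlinarith [sq_nonneg (1 - u), sq_nonneg (1 + u), sq_nonneg u, mul_pos hp (mul_pos hp hp)]
end
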